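/- Let S be a finite nonempty set of squares of the n×n board and let C be a positive integer. If there is no collection of C − 1 diagonals such that every square of S lies on one of them, then there exists a family of at most 2C diagonals, each containing at least one square of S, the sum of whose lengths is at least n·C. -/

import Mathlib

/-- The n×n board: squares (x,y) ∈ ℤ×ℤ with 1 ≤ x ≤ n and 1 ≤ y ≤ n. -/
noncomputable def board (n : ℕ) : Finset (ℤ × ℤ) := Finset.Icc 1 (n : ℤ) ×ˢ Finset.Icc 1 (n : ℤ)

/-- A line of the board: a row (fixed y), a column (fixed x), a positive
diagonal (fixed x − y), or a negative diagonal (fixed x + y). -/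
inductive Line : Type where
  | row : ℤ → Line
  | col : ℤ → Line
  | posDiag : ℤ → Line
  | negDiag : ℤ → Line
deriving DecidableEq

/-- The defining condition for a point to be on a given line. -/
def Line.pred : Line → ℤ × ℤ → Prop
  | .row b, p => p.2 = b
  | .col a, p => p.1 = a
  | .posDiag d, p => p.1 - p.2 = d
  | .negDiag s, p => p.1 + p.2 = s

instance (L : Line) (p : ℤ × ℤ) : Decidable (L.pred p) :=
  match L with
  | .row b => inferInstanceAs (Decidable (p.2 = b))
  | .col a => inferInstanceAs (Decidable (p.1 = a))
  | .posDiag d => inferInstanceAs (Decidable (p.1 - p.2 = d))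
  | .negDiag s => inferInstanceAs (Decidable (p.1 + p.2 = s))

/-- The set of squares of the n×n board lying on a line. -/
noncomputable def Line.squares (n : ℕ) (L : Line) : Finset (ℤ × ℤ) := (board n).filter L.pred

/-- The length of a line: its number of board squares. -/
noncomputable def Line.length (n : ℕ) (L : Line) : ℕ := (L.squares n).card

/-- Whether a line is a diagonal (of either orientation). -/
def Line.isDiag : Line → Prop
  | .posDiag _ => True
  | .negDiag _ => True
  | _ => False

/-- The set of board squares attacked by a placement S of queens: squares q on
the board such that some queen p ∈ S with p ≠ q shares a row, column, or
diagonal with q. -/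
noncomputable def attacked (n : ℕ) (S : Finset (ℤ × ℤ)) : Finset (ℤ × ℤ) :=
  S.biUnion fun p => (board n).filter fun q =>
    q ≠ p ∧ (p.1 = q.1 ∨ p.2 = q.2 ∨ p.1 - p.2 = q.1 - q.2 ∨ p.1 + p.2 = q.1 + q.2)

/-- G(m) = ⌊m²/12⌋ + 1 if m ≡ 3, 6, 9 (mod 12) or m = 10; ⌊m²/12⌋ otherwise. -/
def G (m : ℕ) : ℕ :=
  if m % 12 = 3 ∨ m % 12 = 6 ∨ m % 12 = 9 ∨ m = 10 then m ^ 2 / 12 + 1 else m ^ 2 / 12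

lemma len_posDiag (n : ℕ) (d : ℤ) :
    n - d.natAbs ≤ Line.length n (.posDiag d) := by
  classical
  have hsub : (Finset.Icc (max 1 (1 + d)) (min (n : ℤ) (n + d))).image
      (fun a => (a, a - d)) ⊆ (Line.posDiag d).squares n := by
    intro p hp
    simp only [Finset.mem_image, Finset.mem_Icc] at hp
    obtain ⟨a, ha, rfl⟩ := hp
    simp only [Line.squares, board, Finset.mem_filter, Finset.mem_product, Finset.mem_Icc,
      Line.pred]
    omega
  have hcard := Finset.card_le_card hsub
  rw [Finset.card_image_of_injOn (by intro a _ b _ h; simpa using congrArg Prod.fst h),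
    Int.card_Icc] at hcard
  unfold Line.length
  omega

lemma len_negDiag (n : ℕ) (s : ℤ) :
    n - (s - (n + 1)).natAbs ≤ Line.length n (.negDiag s) := by
  classical
  have hsub : (Finset.Icc (max 1 (s - n)) (min (n : ℤ) (s - 1))).image
      (fun a => (a, s - a)) ⊆ (Line.negDiag s).squares n := by
    intro p hp
    simp only [Finset.mem_image, Finset.mem_Icc] at hp
    obtain ⟨a, ha, rfl⟩ := hp
    simp only [Line.squares, board, Finset.mem_filter, Finset.mem_product, Finset.mem_Icc,
      Line.pred]
    omega
  have hcard := Finset.card_le_card hsub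
  rw [Finset.card_image_of_injOn (by intro a _ b _ h; simpa using congrArg Prod.fst h),
    Int.card_Icc] at hcard
  unfold Line.length
  omega

lemma topC {α : Type*} [DecidableEq α] (n : ℕ) (w : α → ℕ) :
    ∀ (C : ℕ) (P : Finset α),
    ∃ A, A ⊆ P ∧ A.card ≤ C ∧
      ∑ t ∈ Finset.Icc 1 n, min C ((P.filter fun a => t ≤ w a).card) ≤ ∑ a ∈ A, w a := by
  intro C
  induction C with
  | zero =>
    intro P
    exact ⟨∅, Finset.empty_subset _, by simp, by simp⟩
  | succ C ih =>
    intro P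
    rcases P.eq_empty_or_nonempty with rfl | hne
    · exact ⟨∅, Finset.empty_subset _, by simp, by simp⟩
    obtain ⟨a, haP, hmax⟩ := Finset.exists_max_image P w hne
    obtain ⟨A', hA'P, hA'card, hA'sum⟩ := ih (P.erase a)
    have haA' : a ∉ A' := fun h => (Finset.notMem_erase a P) (hA'P h)
    refine ⟨insert a A', ?_, ?_, ?_⟩
    · intro b hb
      rcases Finset.mem_insert.mp hb with rfl | hb
      · exact haP
      · exact Finset.mem_of_mem_erase (hA'P hb)
    · rw [Finset.card_insert_of_notMem haA']; omega
    · rw [Finset.sum_insert haA']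
      have key : ∀ t ∈ Finset.Icc 1 n,
          min (C + 1) ((P.filter fun b => t ≤ w b).card)
            ≤ min C (((P.erase a).filter fun b => t ≤ w b).card)
              + (if t ≤ w a then 1 else 0) := by
        intro t _
        by_cases hta : t ≤ w a
        · have hsub : (P.filter fun b => t ≤ w b)
              ⊆ insert a ((P.erase a).filter fun b => t ≤ w b) := by
            intro b hb
            rcases eq_or_ne b a with rfl | hba
            · exact Finset.mem_insert_self _ _
            · exact Finset.mem_insert_of_mem (Finset.mem_filter.mpr
                ⟨Finset.mem_erase.mpr ⟨hba, (Finset.mem_filter.mp hb).1⟩,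
                  (Finset.mem_filter.mp hb).2⟩)
          have h1 := Finset.card_le_card hsub
          have h2 := Finset.card_insert_le a ((P.erase a).filter fun b => t ≤ w b)
          simp only [if_pos hta]
          omega
        · have hz : (P.filter fun b => t ≤ w b) = ∅ := by
            apply Finset.filter_eq_empty_iff.mpr
            intro b hb
            have := hmax b hb
            omega
          simp [hz]
      calc ∑ t ∈ Finset.Icc 1 n, min (C + 1) ((P.filter fun b => t ≤ w b).card)
          ≤ ∑ t ∈ Finset.Icc 1 n, (min C (((P.erase a).filter fun b => t ≤ w b).card)
              + (if t ≤ w a then 1 else 0)) := Finset.sum_le_sum key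
        _ = (∑ t ∈ Finset.Icc 1 n, min C (((P.erase a).filter fun b => t ≤ w b).card))
              + ∑ t ∈ Finset.Icc 1 n, (if t ≤ w a then 1 else 0) := Finset.sum_add_distrib
        _ ≤ (∑ b ∈ A', w b) + w a := by
            apply add_le_add hA'sum
            rw [← Finset.card_filter]
            calc ((Finset.Icc 1 n).filter fun t => t ≤ w a).card
                ≤ (Finset.Icc 1 (w a)).card := by
                  apply Finset.card_le_card
                  intro t ht
                  simp only [Finset.mem_filter, Finset.mem_Icc] at ht ⊢
                  omega
              _ = w a := by simp
        _ = w a + ∑ b ∈ A', w b := by ring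

/-- If a finite nonempty set S of board squares cannot be covered
by C − 1 diagonals, then there are at most 2C diagonals, each meeting S, whose
lengths sum to at least n·C. -/
theorem long_diagonals_through_uncoverable_set (n C : ℕ) (hn : 0 < n) (hC : 0 < C)
    (S : Finset (ℤ × ℤ)) (hS : S ⊆ board n) (hne : S.Nonempty)
    (hcov : ¬ ∃ D : Finset Line, D.card ≤ C - 1 ∧ (∀ L ∈ D, L.isDiag) ∧
      ∀ p ∈ S, ∃ L ∈ D, L.pred p) :
    ∃ T : Finset Line, T.card ≤ 2 * C ∧ (∀ L ∈ T, L.isDiag) ∧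
      (∀ L ∈ T, ∃ p ∈ S, L.pred p) ∧
      n * C ≤ ∑ L ∈ T, L.length n := by
  classical
  set w : Line → ℕ := Line.length n with hw
  set P : Finset Line := S.image (fun p => Line.posDiag (p.1 - p.2)) with hP
  set N : Finset Line := S.image (fun p => Line.negDiag (p.1 + p.2)) with hN
  have hbd : ∀ p ∈ S, 1 ≤ p.1 ∧ p.1 ≤ n ∧ 1 ≤ p.2 ∧ p.2 ≤ n := by
    intro p hp
    have := hS hp
    simp only [board, Finset.mem_product, Finset.mem_Icc] at this
    exact ⟨this.1.1, this.1.2, this.2.1, this.2.2⟩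
  have hpair : ∀ p ∈ S, n + 1 ≤ w (Line.posDiag (p.1 - p.2)) + w (Line.negDiag (p.1 + p.2)) := by
    intro p hp
    have h1 := len_posDiag n (p.1 - p.2)
    have h2 := len_negDiag n (p.1 + p.2)
    have hb := hbd p hp
    simp only [hw]
    omega
  have hcover : ∀ t : ℕ,
      C ≤ (P.filter fun L => t ≤ w L).card + (N.filter fun L => n + 2 - t ≤ w L).card := by
    intro t
    by_contra h
    push_neg at h
    apply hcov
    refine ⟨(P.filter fun L => t ≤ w L) ∪ (N.filter fun L => n + 2 - t ≤ w L), ?_, ?_, ?_⟩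
    · have := Finset.card_union_le (P.filter fun L => t ≤ w L)
        (N.filter fun L => n + 2 - t ≤ w L)
      omega
    · intro L hL
      rcases Finset.mem_union.mp hL with h' | h' <;>
        · obtain ⟨p, hp, rfl⟩ := Finset.mem_image.mp (Finset.mem_filter.mp h').1
          trivial
    · intro p hp
      have hfg := hpair p hp
      by_cases hf : t ≤ w (Line.posDiag (p.1 - p.2))
      · exact ⟨_, Finset.mem_union_left _ (Finset.mem_filter.mpr
          ⟨Finset.mem_image_of_mem _ hp, hf⟩), by simp [Line.pred]⟩
      · exact ⟨_, Finset.mem_union_right _ (Finset.mem_filter.mpr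
          ⟨Finset.mem_image_of_mem _ hp, by omega⟩), by simp [Line.pred]⟩
  have hmono : ∀ t : ℕ, (N.filter fun L => n + 2 - t ≤ w L).card
      ≤ (N.filter fun L => n + 1 - t ≤ w L).card := by
    intro t
    apply Finset.card_le_card
    intro L hL
    simp only [Finset.mem_filter] at hL ⊢
    exact ⟨hL.1, by omega⟩
  obtain ⟨A, hAP, hAcard, hAsum⟩ := topC n w C P
  obtain ⟨B, hBN, hBcard, hBsum⟩ := topC n w C N
  have hdisj : Disjoint A B := by
    rw [Finset.disjoint_left]
    intro L hLA hLB
    obtain ⟨p, _, rfl⟩ := Finset.mem_image.mp (hAP hLA)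
    obtain ⟨q, _, h⟩ := Finset.mem_image.mp (hBN hLB)
    exact absurd h (by simp)
  refine ⟨A ∪ B, ?_, ?_, ?_, ?_⟩
  · have := Finset.card_union_le A B
    omega
  · intro L hL
    rcases Finset.mem_union.mp hL with h' | h'
    · obtain ⟨p, hp, rfl⟩ := Finset.mem_image.mp (hAP h'); trivial
    · obtain ⟨p, hp, rfl⟩ := Finset.mem_image.mp (hBN h'); trivial
  · intro L hL
    rcases Finset.mem_union.mp hL with h' | h'
    · obtain ⟨p, hp, rfl⟩ := Finset.mem_image.mp (hAP h')
      exact ⟨p, hp, by simp [Line.pred]⟩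
    · obtain ⟨p, hp, rfl⟩ := Finset.mem_image.mp (hBN h')
      exact ⟨p, hp, by simp [Line.pred]⟩
  · have hreindex : ∑ t ∈ Finset.Icc 1 n, min C ((N.filter fun L => n + 1 - t ≤ w L).card)
        = ∑ t ∈ Finset.Icc 1 n, min C ((N.filter fun L => t ≤ w L).card) := by
      apply Finset.sum_nbij' (i := fun t => n + 1 - t) (j := fun t => n + 1 - t)
      · intro t ht; simp only [Finset.mem_Icc] at ht ⊢; omega
      · intro t ht; simp only [Finset.mem_Icc] at ht ⊢; omega
      · intro t ht; simp only [Finset.mem_Icc] at ht; omega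
      · intro t ht; simp only [Finset.mem_Icc] at ht; omega
      · intro t ht
        rfl
    have hsum : ∑ L ∈ A ∪ B, w L = (∑ L ∈ A, w L) + ∑ L ∈ B, w L :=
      Finset.sum_union hdisj
    have hmain : n * C ≤ (∑ L ∈ A, w L) + ∑ L ∈ B, w L := by
      calc n * C = ∑ _t ∈ Finset.Icc 1 n, C := by
            rw [Finset.sum_const, Nat.card_Icc, smul_eq_mul]
            congr 1
        _ ≤ ∑ t ∈ Finset.Icc 1 n, (min C ((P.filter fun L => t ≤ w L).card)
              + min C ((N.filter fun L => n + 1 - t ≤ w L).card)) := by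
            apply Finset.sum_le_sum
            intro t _
            have h1 := hcover t
            have h2 := hmono t
            omega
        _ = (∑ t ∈ Finset.Icc 1 n, min C ((P.filter fun L => t ≤ w L).card))
              + ∑ t ∈ Finset.Icc 1 n, min C ((N.filter fun L => n + 1 - t ≤ w L).card) :=
            Finset.sum_add_distrib
        _ ≤ (∑ L ∈ A, w L) + ∑ L ∈ B, w L := by
            rw [hreindex]
            exact add_le_add hAsum hBsum
    calc n * C ≤ (∑ L ∈ A, w L) + ∑ L ∈ B, w L := hmain
      _ = ∑ L ∈ A ∪ B, w L := hsum.symm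
      _ = ∑ L ∈ A ∪ B, L.length n := rfl
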